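/- Let L ⊂ ℝ^n be a d-dimensional lattice, let K be a convex body contained in the real span of L, and let s ≥ 1 be an integer. Then s^{1/d}·(det(L)/vol(K))^{1/d} ≤ μ_s(K, L) ≤ μ_1(K, L) + (s−1)^{1/d}·(det(L)/vol(K))^{1/d}, where vol(K) denotes the d-dimensional volume of K and det(L) the lattice determinant. -/

import Mathlib

open scoped BigOperators
open Matrix

noncomputable section

/-- The real matrix obtained from an integer matrix. -/
def Rmat {m n : ℕ} (A : Matrix (Fin m) (Fin n) ℤ) : Matrix (Fin m) (Fin n) ℝ :=
  A.map (Int.cast : ℤ → ℝ)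

/-- The real vector obtained from an integer vector. -/
def Rvec {m : ℕ} (b : Fin m → ℤ) : Fin m → ℝ := fun i => (b i : ℝ)

/-- The knapsack polytope P(A,b) = {x ≥ 0 : A x = b}. -/
def knap {m n : ℕ} (A : Matrix (Fin m) (Fin n) ℤ) (b : Fin m → ℝ) : Set (Fin n → ℝ) :=
  {x | (∀ i, 0 ≤ x i) ∧ (Rmat A).mulVec x = b}

/-- The set F_s(A) of integer vectors b for which P(A,b) contains at least s integer points. -/
def feas {m n : ℕ} (s : ℕ) (A : Matrix (Fin m) (Fin n) ℤ) : Set (Fin m → ℤ) :=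
  {b | s ≤ Set.ncard {x : Fin n → ℤ | (∀ i, 0 ≤ x i) ∧ A.mulVec x = b}}

/-- The cone generated by the columns of A. -/
def coneOf {m n : ℕ} (A : Matrix (Fin m) (Fin n) ℤ) : Set (Fin m → ℝ) :=
  {y | ∃ x : Fin n → ℝ, (∀ i, 0 ≤ x i) ∧ (Rmat A).mulVec x = y}

/-- The generalized diagonal s-Frobenius number g_s(A, w). -/
def gDiag {m n : ℕ} (s : ℕ) (A : Matrix (Fin m) (Fin n) ℤ) (w : Fin m → ℝ) : ℝ :=
  sInf {t : ℝ | 0 ≤ t ∧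
    ∀ b : Fin m → ℤ, Rvec b ∈ interior ((fun c => t • w + c) '' coneOf A) → b ∈ feas s A}

/-- v = A·1 is the sum of the columns of A (as a real vector). -/
def vA {m n : ℕ} (A : Matrix (Fin m) (Fin n) ℤ) : Fin m → ℝ :=
  (Rmat A).mulVec (fun _ => 1)

/-- The diagonal s-Frobenius number g_s(A) = g_s(A, A·1). -/
def gFrob {m n : ℕ} (s : ℕ) (A : Matrix (Fin m) (Fin n) ℤ) : ℝ := gDiag s A (vA A)

/-- The regularity assumptions: the m×m minors of A have gcd 1, and the only
nonnegative real solution of A x = 0 is x = 0. -/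
def regular {m n : ℕ} (A : Matrix (Fin m) (Fin n) ℤ) : Prop :=
  Finset.univ.gcd (fun I : Fin m ↪ Fin n => (A.submatrix id ⇑I).det) = 1 ∧
  ∀ x : Fin n → ℝ, (∀ i, 0 ≤ x i) → (Rmat A).mulVec x = 0 → x = 0

/-- The s-covering radius of K with respect to L: the smallest μ > 0 such that every
point of the real span of L lies in y + μK for at least s distinct y ∈ L. -/
def muCov {N : ℕ} (s : ℕ) (K L : Set (Fin N → ℝ)) : ℝ :=
  sInf {μ : ℝ | 0 < μ ∧ ∀ x ∈ Submodule.span ℝ L,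
    ∃ T : Finset (Fin N → ℝ), ↑T ⊆ L ∧ s ≤ T.card ∧ ∀ y ∈ T, ∃ k ∈ K, x = y + μ • k}

/-- The set of absolute values of m×m minors of A. -/
def minorAbs {m n : ℕ} (A : Matrix (Fin m) (Fin n) ℤ) : Set ℤ :=
  {d | ∃ I : Fin m ↪ Fin n, d = |(A.submatrix id ⇑I).det|}

/-- m(A): the minimal absolute m×m minor of A. -/
def mMin {m n : ℕ} (A : Matrix (Fin m) (Fin n) ℤ) : ℤ := sInf (minorAbs A)

/-- M(A): the maximal absolute m×m minor of A. -/
def mMax {m n : ℕ} (A : Matrix (Fin m) (Fin n) ℤ) : ℤ := sSup (minorAbs A)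

/-- The lattice L_A^⊥ = {z ∈ ℤ^n : A z = 0}, viewed as a subset of ℝ^n. -/
def kerLat {m n : ℕ} (A : Matrix (Fin m) (Fin n) ℤ) : Set (Fin n → ℝ) :=
  {x | ∃ z : Fin n → ℤ, A.mulVec z = 0 ∧ x = Rvec z}

/-- √(det (A Aᵀ)). -/
def sqrtDet {m n : ℕ} (A : Matrix (Fin m) (Fin n) ℤ) : ℝ :=
  Real.sqrt (((A * Aᵀ).det : ℤ) : ℝ)

/-- The s-Frobenius number of a positive primitive integer vector. -/
def sFrob {n : ℕ} (s : ℕ) (a : Fin n → ℤ) : ℤ :=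
  sSup {b : ℤ | Set.ncard {x : Fin n → ℤ | (∀ i, 0 ≤ x i) ∧ ∑ i, a i * x i = b} < s}

/-- The full-rank lattice in ℝ^d with basis the columns of an invertible matrix B. -/
def latSet {d : ℕ} (B : Matrix (Fin d) (Fin d) ℝ) : Set (Fin d → ℝ) :=
  {x | ∃ z : Fin d → ℤ, x = B.mulVec (fun i => (z i : ℝ))}

/-- The absolute s-inhomogeneous minimum ϑ_s(K) = inf_L μ_s(K,L)/det(L)^{1/d}. -/
def theta (s d : ℕ) (K : Set (Fin d → ℝ)) : ℝ :=
  sInf {r : ℝ | ∃ B : Matrix (Fin d) (Fin d) ℝ, B.det ≠ 0 ∧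
    r = muCov s K (latSet B) / |B.det| ^ ((1 : ℝ) / d)}

/-- The standard simplex S_d ⊂ ℝ^d. -/
def stdSimplex' (d : ℕ) : Set (Fin d → ℝ) :=
  {x | (∀ i, 0 ≤ x i) ∧ ∑ i, x i ≤ 1}

open MeasureTheory Pointwise Set
open scoped ENNReal NNReal

namespace SCov
variable {n d : ℕ}

def cube (d : ℕ) : Set (Fin d → ℝ) := Set.univ.pi fun _ => Set.Ico (0:ℝ) 1

def icast {d : ℕ} (z : Fin d → ℤ) : Fin d → ℝ := fun i => (z i : ℝ)

lemma icast_inj : Function.Injective (icast (d := d)) := by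
  intro a b h
  funext i
  have := congrFun h i
  simpa [icast] using this

lemma measurable_cube : MeasurableSet (cube d) :=
  MeasurableSet.univ_pi fun _ => measurableSet_Ico

lemma volume_cube : volume (cube d) = 1 := by
  rw [cube, volume_pi_pi]; simp

lemma mem_vadd_cube {z : Fin d → ℤ} {x : Fin d → ℝ} :
    x ∈ icast z +ᵥ cube d ↔ ∀ i, z i = ⌊x i⌋ := by
  rw [Set.mem_vadd_set_iff_neg_vadd_mem]
  simp only [cube, Set.mem_pi, Set.mem_univ, forall_true_left, Set.mem_Ico]
  constructor
  · intro h i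
    have := h i
    simp only [Pi.vadd_apply, vadd_eq_add, Pi.add_apply, Pi.neg_apply, icast] at this
    rw [eq_comm, Int.floor_eq_iff]
    constructor
    · linarith [this.1]
    · linarith [this.2]
  · intro h i
    have hz := h i
    have h1 := Int.floor_le (x i)
    have h2 := Int.lt_floor_add_one (x i)
    simp only [Pi.vadd_apply, vadd_eq_add, Pi.add_apply, Pi.neg_apply, icast, hz]
    constructor
    · linarith
    · linarith

lemma partition (S : Set (Fin d → ℝ)) (hS : MeasurableSet S) :
    volume S = ∑' z : Fin d → ℤ, volume (S ∩ (icast z +ᵥ cube d)) := by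
  have hU : S = ⋃ z : Fin d → ℤ, S ∩ (icast z +ᵥ cube d) := by
    ext x
    constructor
    · intro hx
      exact Set.mem_iUnion.2 ⟨fun i => ⌊x i⌋, hx, mem_vadd_cube.2 fun i => rfl⟩
    · rintro hx
      obtain ⟨z, hz⟩ := Set.mem_iUnion.1 hx
      exact hz.1
  have hmeas : ∀ z : Fin d → ℤ, MeasurableSet (S ∩ (icast z +ᵥ cube d)) := fun z =>
    hS.inter (measurable_cube.const_vadd _)
  have hdisj : Pairwise (Function.onFun Disjoint fun z : Fin d → ℤ =>
      S ∩ (icast z +ᵥ cube d)) := by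
    intro a b hab
    refine Set.disjoint_left.2 fun x hxa hxb => hab ?_
    funext i
    exact (mem_vadd_cube.1 hxa.2 i).trans (mem_vadd_cube.1 hxb.2 i).symm
  conv_lhs => rw [hU]
  exact measure_iUnion hdisj hmeas

lemma tsum_translates (S : Set (Fin d → ℝ)) (hS : MeasurableSet S) :
    ∑' z : Fin d → ℤ, volume (cube d ∩ (icast z +ᵥ S)) = volume S := by
  have key : ∀ z : Fin d → ℤ, volume (cube d ∩ (icast z +ᵥ S))
      = volume (S ∩ (icast (-z) +ᵥ cube d)) := by
    intro z
    have h1 : volume (cube d ∩ (icast z +ᵥ S))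
        = volume (icast (-z) +ᵥ (cube d ∩ (icast z +ᵥ S))) := (measure_vadd _ _ _).symm
    rw [h1, Set.vadd_set_inter]
    have h2 : icast (-z) +ᵥ (icast z +ᵥ S) = S := by
      rw [vadd_vadd]
      have : icast (-z) + icast z = 0 := by funext i; simp [icast]
      rw [this, zero_vadd]
    rw [h2, Set.inter_comm]
  rw [tsum_congr key]
  have := (Equiv.neg (Fin d → ℤ)).tsum_eq fun z => volume (S ∩ (icast z +ᵥ cube d))
  simp only [Equiv.neg_apply] at this
  rw [this]
  exact (partition S hS).symm


lemma lintegral_multiplicity (S : Set (Fin d → ℝ)) (hS : MeasurableSet S) :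
    ∫⁻ x in cube d, ∑' z : Fin d → ℤ, (icast z +ᵥ S).indicator 1 x = volume S := by
  rw [lintegral_tsum fun z => ((measurable_one.indicator (hS.const_vadd _)).aemeasurable)]
  rw [← tsum_translates S hS]
  congr 1
  funext z
  rw [lintegral_indicator_one (hS.const_vadd _), Measure.restrict_apply (hS.const_vadd _)]
  rw [Set.inter_comm]

lemma le_volume_of_multiplicity (S : Set (Fin d → ℝ)) (hS : MeasurableSet S) (s : ℕ)
    (h : ∀ x : Fin d → ℝ, (s : ℝ≥0∞) ≤ ∑' z : Fin d → ℤ, (icast z +ᵥ S).indicator 1 x) :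
    (s : ℝ≥0∞) ≤ volume S := by
  calc (s : ℝ≥0∞) = ∫⁻ _ in cube d, (s : ℝ≥0∞) := by
        rw [setLIntegral_const, volume_cube, mul_one]
    _ ≤ ∫⁻ x in cube d, ∑' z : Fin d → ℤ, (icast z +ᵥ S).indicator 1 x :=
        lintegral_mono fun x => h x
    _ = volume S := lintegral_multiplicity S hS

lemma volume_le_of_multiplicity (S : Set (Fin d → ℝ)) (hS : MeasurableSet S) (m : ℕ)
    (h : ∀ x : Fin d → ℝ, ∑' z : Fin d → ℤ, (icast z +ᵥ S).indicator 1 x ≤ (m : ℝ≥0∞)) :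
    volume S ≤ (m : ℝ≥0∞) := by
  calc volume S = ∫⁻ x in cube d, ∑' z : Fin d → ℤ, (icast z +ᵥ S).indicator 1 x :=
        (lintegral_multiplicity S hS).symm
    _ ≤ ∫⁻ _ in cube d, (m : ℝ≥0∞) := lintegral_mono fun x => h x
    _ = m := by rw [setLIntegral_const, volume_cube, mul_one]

lemma multiplicity_ge (S : Set (Fin d → ℝ)) (s : ℕ) (x : Fin d → ℝ)
    (T : Finset (Fin d → ℤ)) (hcard : s ≤ T.card) (hT : ∀ z ∈ T, x ∈ icast z +ᵥ S) :
    (s : ℝ≥0∞) ≤ ∑' z : Fin d → ℤ, (icast z +ᵥ S).indicator 1 x := by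
  have : (s : ℝ≥0∞) ≤ ∑ z ∈ T, (icast z +ᵥ S).indicator 1 x := by
    have : ∀ z ∈ T, (icast z +ᵥ S).indicator (1 : (Fin d → ℝ) → ℝ≥0∞) x = 1 := fun z hz => by
      rw [Set.indicator_of_mem (hT z hz)]; rfl
    rw [Finset.sum_congr rfl this, Finset.sum_const, nsmul_eq_mul, mul_one]
    exact_mod_cast hcard
  exact this.trans (ENNReal.sum_le_tsum T)

lemma multiplicity_le (S : Set (Fin d → ℝ)) (m : ℕ) (x : Fin d → ℝ)
    (h : ∀ T : Finset (Fin d → ℤ), (∀ z ∈ T, x ∈ icast z +ᵥ S) → T.card ≤ m) :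
    ∑' z : Fin d → ℤ, (icast z +ᵥ S).indicator 1 x ≤ (m : ℝ≥0∞) := by
  rw [ENNReal.tsum_eq_iSup_sum]
  refine iSup_le fun T => ?_
  classical
  have : ∑ z ∈ T, (icast z +ᵥ S).indicator (1 : (Fin d → ℝ) → ℝ≥0∞) x
      = (T.filter fun z => x ∈ icast z +ᵥ S).card := by
    rw [Finset.card_filter]
    push_cast
    refine Finset.sum_congr rfl fun z _ => ?_
    by_cases hz : x ∈ icast z +ᵥ S <;> simp [hz]
  rw [this]
  exact_mod_cast h _ fun z hz => (Finset.mem_filter.1 hz).2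

def phi (b : Fin d → Fin n → ℝ) : (Fin d → ℝ) →ₗ[ℝ] (Fin n → ℝ) where
  toFun := fun c => ∑ i, c i • b i
  map_add' := fun c c' => by
    simp [add_smul, Finset.sum_add_distrib]
  map_smul' := fun a c => by
    simp [smul_smul, Finset.smul_sum]

lemma phi_apply (b : Fin d → Fin n → ℝ) (c : Fin d → ℝ) : phi b c = ∑ i, c i • b i := rfl

lemma phi_inj {b : Fin d → Fin n → ℝ} (hb : LinearIndependent ℝ b) :
    Function.Injective (phi b) := by
  rw [← LinearMap.ker_eq_bot]
  rw [LinearMap.ker_eq_bot']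
  intro c hc
  have h := Fintype.linearIndependent_iff.1 hb c hc
  funext i; exact h i

lemma phi_single (b : Fin d → Fin n → ℝ) (i : Fin d) : phi b (Pi.single i 1) = b i := by
  rw [phi_apply]
  rw [Finset.sum_eq_single i]
  · simp
  · intro j _ hj; simp [Pi.single_apply, hj]
  · simp

lemma gram_pos {b : Fin d → Fin n → ℝ} (hb : LinearIndependent ℝ b) :
    0 < Matrix.det (Matrix.of fun i j : Fin d => ∑ t, b i t * b j t) := by
  set B : Matrix (Fin d) (Fin n) ℝ := Matrix.of fun i t => b i t with hB
  have hG : (Matrix.of fun i j : Fin d => ∑ t, b i t * b j t) = B * Bᵀ := by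
    ext i j
    simp [Matrix.mul_apply, hB]
  rw [hG]
  refine Matrix.PosDef.det_pos ?_
  rw [Matrix.posDef_iff_dotProduct_mulVec]
  constructor
  · have := Matrix.isHermitian_mul_conjTranspose_self B
    rwa [Matrix.conjTranspose_eq_transpose_of_trivial] at this
  · intro x hx
    have hxw : Matrix.vecMul x B ≠ 0 := by
      intro h0
      apply hx
      have : ∑ i, x i • b i = 0 := by
        funext t
        have := congrFun h0 t
        simpa [Matrix.vecMul, dotProduct, hB, Finset.sum_apply] using this
      have h := Fintype.linearIndependent_iff.1 hb x this
      funext i; exact h i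
    have key : x ⬝ᵥ (B * Bᵀ).mulVec x = Matrix.vecMul x B ⬝ᵥ Matrix.vecMul x B := by
      rw [← Matrix.mulVec_mulVec, Matrix.dotProduct_mulVec, Matrix.mulVec_transpose]
    have hpos : 0 < Matrix.vecMul x B ⬝ᵥ Matrix.vecMul x B := by
      have hne : Matrix.vecMul x B ⬝ᵥ Matrix.vecMul x B ≠ 0 :=
        fun h => hxw (dotProduct_self_eq_zero.1 h)
      have hnn : 0 ≤ Matrix.vecMul x B ⬝ᵥ Matrix.vecMul x B :=
        Finset.sum_nonneg fun t _ => mul_self_nonneg _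
      exact lt_of_le_of_ne hnn (Ne.symm hne)
    calc (0:ℝ) < Matrix.vecMul x B ⬝ᵥ Matrix.vecMul x B := hpos
      _ = x ⬝ᵥ (B * Bᵀ).mulVec x := key.symm
      _ = star x ⬝ᵥ (B * Bᵀ).mulVec x := by simp

lemma rpow_subadd {x y p : ℝ} (hx : 0 ≤ x) (hy : 0 ≤ y) (hp : 0 ≤ p) (hp1 : p ≤ 1) :
    (x + y) ^ p ≤ x ^ p + y ^ p := by
  have key := NNReal.rpow_add_le_add_rpow x.toNNReal y.toNNReal hp hp1
  have hxy : ((x.toNNReal + y.toNNReal : ℝ≥0) : ℝ) = x + y := by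
    push_cast
    rw [Real.coe_toNNReal _ hx, Real.coe_toNNReal _ hy]
  calc (x + y) ^ p = (((x.toNNReal + y.toNNReal : ℝ≥0) : ℝ)) ^ p := by rw [hxy]
    _ = (((x.toNNReal + y.toNNReal) ^ p : ℝ≥0) : ℝ) := by
        rw [NNReal.coe_rpow]
    _ ≤ ((x.toNNReal ^ p + y.toNNReal ^ p : ℝ≥0) : ℝ) := by exact_mod_cast key
    _ = x ^ p + y ^ p := by
        push_cast [NNReal.coe_rpow]
        rw [Real.coe_toNNReal _ hx, Real.coe_toNNReal _ hy]
end SCov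


set_option maxHeartbeats 1600000 in
/-- Bounds on the s-covering radius of a convex body K with respect to a d-dimensional
lattice L ⊂ ℝ^n spanned over ℤ by linearly independent vectors b₁, …, b_d.  Here
det L = √(det Gram(b)) and the d-dimensional volume of K is expressed via the
parametrization c ↦ ∑ cᵢ bᵢ of the real span of L. -/
theorem stmt_13 {n d : ℕ} (hd : 1 ≤ d) (s : ℕ) (hs : 1 ≤ s)
    (b : Fin d → Fin n → ℝ) (hb : LinearIndependent ℝ b)
    (L : Set (Fin n → ℝ)) (hL : L = {x | ∃ z : Fin d → ℤ, x = ∑ i, (z i : ℝ) • b i})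
    (K : Set (Fin n → ℝ))
    (hKspan : K ⊆ (Submodule.span ℝ (Set.range b) : Set (Fin n → ℝ)))
    (hKcomp : IsCompact K) (hKconv : Convex ℝ K)
    (hKint : (interior ((fun c : Fin d → ℝ => ∑ i, c i • b i) ⁻¹' K)).Nonempty)
    (detL volK : ℝ)
    (hdetL : detL = Real.sqrt (Matrix.det (Matrix.of fun i j : Fin d => ∑ t, b i t * b j t)))
    (hvolK : volK = detL *
      (MeasureTheory.volume ((fun c : Fin d → ℝ => ∑ i, c i • b i) ⁻¹' K)).toReal) :
    (s : ℝ) ^ ((1 : ℝ) / d) * (detL / volK) ^ ((1 : ℝ) / d) ≤ muCov s K L ∧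
      muCov s K L ≤ muCov 1 K L + ((s : ℝ) - 1) ^ ((1 : ℝ) / d) * (detL / volK) ^ ((1 : ℝ) / d) := by
  classical
  obtain ⟨c0, hc0⟩ := hKint
  have hinj := SCov.phi_inj hb
  have hker : LinearMap.ker (SCov.phi b) = ⊥ := LinearMap.ker_eq_bot.2 hinj
  set φ := SCov.phi b with hφdef
  set K' : Set (Fin d → ℝ) := (fun c : Fin d → ℝ => ∑ i, c i • b i) ⁻¹' K with hK'def
  have hK'phi : ∀ c : Fin d → ℝ, (c ∈ K' ↔ φ c ∈ K) := fun c => Iff.rfl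
  have hrange : ∀ k ∈ K, ∃ k' ∈ K', φ k' = k := by
    intro k hk
    have h1 : Submodule.span ℝ (Set.range b) ≤ LinearMap.range φ := by
      rw [Submodule.span_le]
      rintro _ ⟨i, rfl⟩
      exact ⟨Pi.single i 1, SCov.phi_single b i⟩
    obtain ⟨k', hk'⟩ := h1 (hKspan hk)
    exact ⟨k', by rw [hK'phi, hk']; exact hk, hk'⟩
  have hLphi : ∀ y ∈ L, ∃ z : Fin d → ℤ, y = φ (SCov.icast z) := by
    intro y hy
    rw [hL] at hy
    obtain ⟨z, hz⟩ := hy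
    exact ⟨z, hz⟩
  have hLmem : ∀ z : Fin d → ℤ, φ (SCov.icast z) ∈ L := by
    intro z; rw [hL]; exact ⟨z, rfl⟩
  have hspan_surj : ∀ x ∈ Submodule.span ℝ L, ∃ c : Fin d → ℝ, x = φ c := by
    intro x hx
    have h1 : Submodule.span ℝ L ≤ LinearMap.range φ := by
      rw [Submodule.span_le]
      intro y hy
      obtain ⟨z, hz⟩ := hLphi y hy
      exact ⟨SCov.icast z, hz.symm⟩
    obtain ⟨c, hc⟩ := h1 hx
    exact ⟨c, hc.symm⟩
  have hbL : ∀ i, b i ∈ L := by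
    intro i
    rw [hL]
    refine ⟨Pi.single i 1, ?_⟩
    rw [Finset.sum_eq_single i]
    · simp
    · intro j _ hj; simp [Pi.single_apply, hj]
    · simp
  have hphis : ∀ c : Fin d → ℝ, φ c ∈ Submodule.span ℝ L := by
    intro c
    have h3 : φ c = ∑ i, c i • b i := rfl
    rw [h3]
    exact Submodule.sum_mem _ fun i _ =>
      Submodule.smul_mem _ _ (Submodule.subset_span (hbL i))
  have hK'cpt : IsCompact K' :=
    (LinearMap.isClosedEmbedding_of_injective hker).isCompact_preimage hKcomp
  have hK'meas : MeasurableSet K' := hK'cpt.isClosed.measurableSet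
  have hK'conv : Convex ℝ K' := hKconv.linear_preimage φ
  set V : ℝ := (MeasureTheory.volume K').toReal with hVdef
  have hVfin : MeasureTheory.volume K' ≠ ⊤ := hK'cpt.measure_lt_top.ne
  have hVpos' : 0 < MeasureTheory.volume K' :=
    MeasureTheory.Measure.measure_pos_of_nonempty_interior _ ⟨c0, hc0⟩
  have hV : 0 < V := ENNReal.toReal_pos hVpos'.ne' hVfin
  have hvolK' : MeasureTheory.volume K' = ENNReal.ofReal V := (ENNReal.ofReal_toReal hVfin).symm
  have hdet : 0 < detL := by
    rw [hdetL]; exact Real.sqrt_pos.2 (SCov.gram_pos hb)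
  have hratio : detL / volK = 1 / V := by
    rw [hvolK]
    rw [div_eq_div_iff (mul_pos hdet hV).ne' hV.ne']
    ring
  have hd0 : (0:ℝ) < (d:ℝ) := by exact_mod_cast Nat.lt_of_lt_of_le Nat.zero_lt_one hd
  have hdne : d ≠ 0 := by omega
  have hsmulvol : ∀ μ : ℝ, 0 ≤ μ →
      MeasureTheory.volume (μ • K') = ENNReal.ofReal (μ ^ d * V) := by
    intro μ hμ
    rw [MeasureTheory.Measure.addHaar_smul_of_nonneg MeasureTheory.volume hμ K', hvolK',
      ← ENNReal.ofReal_mul (pow_nonneg hμ _)]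
    simp
  have hsmulmeas : ∀ μ : ℝ, MeasurableSet (μ • K') :=
    fun μ => ((hK'cpt.smul μ).isClosed).measurableSet
  obtain ⟨ψ, hψ⟩ := φ.exists_leftInverse_of_injective hker
  have hψc : ∀ c : Fin d → ℝ, ψ (φ c) = c := fun c => by
    have h4 := LinearMap.congr_fun hψ c
    simpa using h4
  set g : (Fin n → ℝ) → (Fin d → ℤ) := fun y => (fun i => ⌊ψ y i⌋) with hgdef
  have hg : ∀ z : Fin d → ℤ, g (φ (SCov.icast z)) = z := by
    intro z; funext i
    simp [hgdef, hψc, SCov.icast]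
  set Sset : ℕ → Set ℝ := fun s' => {μ : ℝ | 0 < μ ∧ ∀ x ∈ Submodule.span ℝ L,
    ∃ T : Finset (Fin n → ℝ), ↑T ⊆ L ∧ s' ≤ T.card ∧ ∀ y ∈ T, ∃ k ∈ K, x = y + μ • k}
    with hSsetdef
  have hmc : ∀ s' : ℕ, muCov s' K L = sInf (Sset s') := fun s' => rfl
  have hbdd : ∀ s' : ℕ, BddBelow (Sset s') := fun s' => ⟨0, fun μ hμ => hμ.1.le⟩
  -- Key A : every element of the covering set satisfies s' ≤ μ^d V
  have keyA : ∀ s' : ℕ, ∀ μ ∈ Sset s', (s' : ℝ) ≤ μ ^ d * V := by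
    intro s' μ hμmem
    obtain ⟨hμpos, hcov⟩ := hμmem
    have hmult : ∀ x : Fin d → ℝ,
        (s' : ℝ≥0∞) ≤ ∑' z : Fin d → ℤ, (SCov.icast z +ᵥ (μ • K')).indicator 1 x := by
      intro x
      obtain ⟨T, hTL, hTcard, hTc⟩ := hcov (φ x) (hphis x)
      have hginj : Set.InjOn g ↑T := by
        intro y1 h1 y2 h2 h12
        obtain ⟨z1, rfl⟩ := hLphi y1 (hTL h1)
        obtain ⟨z2, rfl⟩ := hLphi y2 (hTL h2)
        rw [hg, hg] at h12
        rw [h12]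
      refine SCov.multiplicity_ge _ s' x (T.image g) ?_ ?_
      · rw [Finset.card_image_of_injOn hginj]; exact hTcard
      · intro z hz
        obtain ⟨y, hyT, hyz⟩ := Finset.mem_image.1 hz
        obtain ⟨zy, rfl⟩ := hLphi y (hTL hyT)
        rw [hg] at hyz
        subst hyz
        obtain ⟨k, hk, hxk⟩ := hTc _ hyT
        obtain ⟨k', hk', rfl⟩ := hrange k hk
        have hxeq : x = SCov.icast zy + μ • k' := by
          apply hinj
          rw [_root_.map_add, _root_.map_smul]
          exact hxk
        rw [Set.mem_vadd_set_iff_neg_vadd_mem]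
        have h5 : -SCov.icast zy +ᵥ x = μ • k' := by
          simp only [vadd_eq_add]
          rw [hxeq]; abel
        rw [h5]
        exact smul_mem_smul_set hk'
    have h6 := SCov.le_volume_of_multiplicity (μ • K') (hsmulmeas μ) s' hmult
    rw [hsmulvol μ hμpos.le] at h6
    have h7 : ENNReal.ofReal (s' : ℝ) ≤ ENNReal.ofReal (μ ^ d * V) := by
      rwa [ENNReal.ofReal_natCast]
    exact (ENNReal.ofReal_le_ofReal_iff (by positivity)).1 h7
  -- nonemptiness of the covering sets
  have hne : ∀ s' : ℕ, 1 ≤ s' → (Sset s').Nonempty := by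
    intro s' hs'
    obtain ⟨r, hr, hball⟩ := Metric.isOpen_iff.1 isOpen_interior c0 hc0
    set μ0 : ℝ := ((s' : ℝ) + 2) / r with hμ0def
    have hμ0 : 0 < μ0 := by positivity
    refine ⟨μ0, hμ0, ?_⟩
    intro x hx
    obtain ⟨c, rfl⟩ := hspan_surj x hx
    set i0 : Fin d := ⟨0, hd⟩ with hi0def
    set zj : ℕ → Fin d → ℤ := fun j i => ⌊c i - μ0 * c0 i⌋ - (if i = i0 then (j : ℤ) else 0)
      with hzjdef
    set kj : ℕ → Fin d → ℝ := fun j => μ0⁻¹ • (c - SCov.icast (zj j)) with hkjdef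
    have hceq : ∀ j, c = SCov.icast (zj j) + μ0 • kj j := by
      intro j
      rw [hkjdef]
      simp only []
      rw [smul_inv_smul₀ hμ0.ne']
      abel
    have hkmem : ∀ j, j < s' → kj j ∈ K' := by
      intro j hj
      refine interior_subset (hball ?_)
      rw [Metric.mem_ball, dist_pi_lt_iff hr]
      intro i
      have hfl1 := Int.floor_le (c i - μ0 * c0 i)
      have hfl2 := Int.lt_floor_add_one (c i - μ0 * c0 i)
      have hkji : kj j i = μ0⁻¹ * (c i - (zj j i : ℝ)) := rfl
      have hzji : (zj j i : ℝ) = (⌊c i - μ0 * c0 i⌋ : ℝ) - (if i = i0 then (j:ℝ) else 0) := by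
        simp only [hzjdef]
        push_cast [apply_ite (fun z : ℤ => (z:ℝ))]
        ring
      have htnn : (0:ℝ) ≤ (if i = i0 then (j:ℝ) else 0) := by
        split <;> positivity
      have htub : (if i = i0 then (j:ℝ) else 0) ≤ (s':ℝ) - 1 := by
        have hj' : (j:ℝ) ≤ (s':ℝ) - 1 := by
          have : (j:ℝ) + 1 ≤ (s':ℝ) := by exact_mod_cast hj
          linarith
        split
        · exact hj'
        · linarith [hj', Nat.cast_nonneg (α := ℝ) j]
      have hdiff : kj j i - c0 i
          = μ0⁻¹ * ((c i - μ0 * c0 i) - (⌊c i - μ0 * c0 i⌋ : ℝ) + (if i = i0 then (j:ℝ) else 0)) := by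
        rw [hkji, hzji]
        linear_combination (c0 i) * inv_mul_cancel₀ hμ0.ne'
      rw [Real.dist_eq, hdiff]
      have hnum_nn : (0:ℝ) ≤ (c i - μ0 * c0 i) - (⌊c i - μ0 * c0 i⌋ : ℝ)
          + (if i = i0 then (j:ℝ) else 0) := by
        have := sub_nonneg.2 hfl1
        linarith
      have hnum_ub : (c i - μ0 * c0 i) - (⌊c i - μ0 * c0 i⌋ : ℝ)
          + (if i = i0 then (j:ℝ) else 0) < (s':ℝ) := by
        have h9 : (c i - μ0 * c0 i) - (⌊c i - μ0 * c0 i⌋ : ℝ) < 1 := by linarith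
        linarith
      rw [abs_of_nonneg (by positivity)]
      have h10 : μ0⁻¹ * ((c i - μ0 * c0 i) - (⌊c i - μ0 * c0 i⌋ : ℝ)
          + (if i = i0 then (j:ℝ) else 0)) < μ0⁻¹ * (s':ℝ) + 0 := by
        have := mul_lt_mul_of_pos_left hnum_ub (inv_pos.2 hμ0)
        linarith
      have h11 : μ0⁻¹ * (s':ℝ) < r := by
        rw [hμ0def]
        rw [inv_div, div_mul_eq_mul_div, div_lt_iff₀ (by positivity)]
        nlinarith [hr, (Nat.one_le_cast (α := ℝ)).2 hs']
      linarith
    have hzjinj : Set.InjOn (fun j : ℕ => φ (SCov.icast (zj j))) ↑(Finset.range s') := by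
      intro j1 _ j2 _ h12
      have h13 := SCov.icast_inj (hinj h12)
      have h14 := congrFun h13 i0
      simp only [hzjdef, if_true, eq_self_iff_true, sub_right_inj, Int.natCast_inj] at h14
      exact h14
    refine ⟨(Finset.range s').image (fun j => φ (SCov.icast (zj j))), ?_, ?_, ?_⟩
    · intro y hy
      simp only [Finset.coe_image, Set.mem_image, Finset.mem_coe] at hy
      obtain ⟨j, _, rfl⟩ := hy
      exact hLmem _
    · rw [Finset.card_image_of_injOn hzjinj, Finset.card_range]
    · intro y hy
      obtain ⟨j, hjr, rfl⟩ := Finset.mem_image.1 hy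
      have hjlt := Finset.mem_range.1 hjr
      refine ⟨φ (kj j), (hK'phi _).1 (hkmem j hjlt), ?_⟩
      conv_lhs => rw [hceq j]
      rw [_root_.map_add, _root_.map_smul]
  -- lower bound
  have hlow : (s : ℝ) ^ ((1 : ℝ) / d) * (detL / volK) ^ ((1 : ℝ) / d) ≤ muCov s K L := by
    rw [hmc, hratio, ← Real.mul_rpow (by positivity) (by positivity), mul_one_div]
    refine le_csInf (hne s hs) fun μ hμmem => ?_
    have hA := keyA s μ hμmem
    have hμpos := hμmem.1
    have h2 : (s:ℝ)/V ≤ μ ^ d := (div_le_iff₀ hV).2 hA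
    calc ((s:ℝ)/V) ^ ((1:ℝ)/d) ≤ (μ ^ d) ^ ((1:ℝ)/d) :=
          Real.rpow_le_rpow (by positivity) h2 (by positivity)
      _ = μ := by
          rw [one_div, Real.pow_rpow_inv_natCast hμpos.le hdne]
  have hs1R : (0:ℝ) ≤ (s:ℝ) - 1 := by
    have : (1:ℝ) ≤ (s:ℝ) := by exact_mod_cast hs
    linarith
  -- upper bound
  have hupper : muCov s K L ≤ muCov 1 K L + (((s:ℝ)-1)/V) ^ ((1:ℝ)/d) := by
    refine le_of_forall_pos_le_add fun ε hε => ?_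
    obtain ⟨μb, hμbmem, hμblt⟩ := Real.lt_sInf_add_pos (hne 1 le_rfl) (half_pos hε)
    set δ : ℝ := (ε/2) ^ d with hδdef
    have hδ : 0 < δ := by positivity
    set ρ' : ℝ := (((s:ℝ)-1)/V + δ) ^ ((1:ℝ)/d) with hρ'def
    have hρ'pos : 0 < ρ' := Real.rpow_pos_of_pos (by positivity) _
    have hρ'le : ρ' ≤ (((s:ℝ)-1)/V) ^ ((1:ℝ)/d) + ε/2 := by
      have hsub := SCov.rpow_subadd (x := ((s:ℝ)-1)/V) (y := δ) (p := (1:ℝ)/d)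
        (by positivity) hδ.le (by positivity)
        (by rw [div_le_one hd0]; exact_mod_cast hd)
      have hδr : δ ^ ((1:ℝ)/d) = ε/2 := by
        rw [hδdef, one_div, Real.pow_rpow_inv_natCast (by positivity) hdne]
      calc ρ' ≤ (((s:ℝ)-1)/V) ^ ((1:ℝ)/d) + δ ^ ((1:ℝ)/d) := hsub
        _ = (((s:ℝ)-1)/V) ^ ((1:ℝ)/d) + ε/2 := by rw [hδr]
    have hρ'd : ρ' ^ d = ((s:ℝ)-1)/V + δ := by
      rw [hρ'def, one_div, Real.rpow_inv_natCast_pow (by positivity) hdne]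
    obtain ⟨hμbpos, hμbcov⟩ := hμbmem
    have hmemS : (μb + ρ') ∈ Sset s := by
      refine ⟨by positivity, ?_⟩
      intro x hx
      obtain ⟨c, rfl⟩ := hspan_surj x hx
      have hy0 : ∃ y0 : Fin d → ℝ, ∃ Z : Finset (Fin d → ℤ), Z.card = s ∧
          ∀ z ∈ Z, y0 ∈ SCov.icast z +ᵥ (ρ' • K') := by
        by_contra hno
        push_neg at hno
        have hml : ∀ y : Fin d → ℝ,
            ∑' z : Fin d → ℤ, (SCov.icast z +ᵥ (ρ' • K')).indicator 1 y
              ≤ ((s-1 : ℕ) : ℝ≥0∞) := by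
          intro y
          refine SCov.multiplicity_le _ _ y fun T hT => ?_
          by_contra hTc
          push_neg at hTc
          have hTs : s ≤ T.card := by omega
          obtain ⟨Z, hZT, hZcard⟩ := Finset.exists_subset_card_eq hTs
          obtain ⟨z, hzZ, hznot⟩ := hno y Z hZcard
          exact hznot (hT z (hZT hzZ))
        have hvle := SCov.volume_le_of_multiplicity _ (hsmulmeas ρ') (s-1) hml
        rw [hsmulvol ρ' hρ'pos.le] at hvle
        have hle2 : ρ' ^ d * V ≤ ((s-1:ℕ):ℝ) := by
          rw [← ENNReal.ofReal_natCast] at hvle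
          exact (ENNReal.ofReal_le_ofReal_iff (by positivity)).1 hvle
        have hcast : ((s-1:ℕ):ℝ) = (s:ℝ) - 1 := by
          push_cast [Nat.cast_sub hs]
          ring
        rw [hcast, hρ'd] at hle2
        have hdm : ((s:ℝ)-1)/V * V = (s:ℝ)-1 := div_mul_cancel₀ _ hV.ne'
        rw [add_mul, hdm] at hle2
        linarith [mul_pos hδ hV]
      obtain ⟨y0, Z, hZcard, hZcov⟩ := hy0
      obtain ⟨T1, hT1L, hT1card, hT1c⟩ := hμbcov (φ (c - y0)) (hphis _)
      obtain ⟨y1, hy1T⟩ := Finset.card_pos.1 hT1card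
      obtain ⟨k1, hk1K, hk1eq⟩ := hT1c y1 hy1T
      obtain ⟨w, rfl⟩ := hLphi y1 (hT1L hy1T)
      obtain ⟨k1', hk1'K, rfl⟩ := hrange k1 hk1K
      have hceq2 : c - y0 = SCov.icast w + μb • k1' := by
        apply hinj
        rw [_root_.map_add, _root_.map_smul]
        exact hk1eq
      set τ : ℝ := μb + ρ' with hτdef
      have hτ : 0 < τ := by positivity
      refine ⟨Z.image fun z => φ (SCov.icast (z + w)), ?_, ?_, ?_⟩
      · intro y hy
        simp only [Finset.coe_image, Set.mem_image, Finset.mem_coe] at hy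
        obtain ⟨z, _, rfl⟩ := hy
        exact hLmem (z + w)
      · rw [Finset.card_image_of_injOn, hZcard]
        intro z1 _ z2 _ h12
        have h13 := SCov.icast_inj (hinj h12)
        exact add_right_cancel h13
      · intro y hy
        obtain ⟨z, hzZ, rfl⟩ := Finset.mem_image.1 hy
        have hz := hZcov z hzZ
        rw [Set.mem_vadd_set_iff_neg_vadd_mem] at hz
        obtain ⟨k2', hk2'K, hk2eq⟩ := Set.mem_smul_set.1 hz
        have hy0eq : y0 = SCov.icast z + ρ' • k2' := by
          have h14 : -SCov.icast z + y0 = ρ' • k2' := by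
            simpa only [vadd_eq_add] using hk2eq.symm
          have := congrArg (fun v => SCov.icast z + v) h14
          simpa only [add_neg_cancel_left] using this
        set kk' : Fin d → ℝ := (μb/τ) • k1' + (ρ'/τ) • k2' with hkkdef
        have hkkK' : kk' ∈ K' := hK'conv hk1'K hk2'K (by positivity) (by positivity)
          (by rw [← add_div]; exact div_self hτ.ne')
        have hsmuleq : τ • kk' = μb • k1' + ρ' • k2' := by
          rw [hkkdef, smul_add, smul_smul, smul_smul]
          rw [mul_div_cancel₀ _ hτ.ne', mul_div_cancel₀ _ hτ.ne']
        have hc2 : c = SCov.icast (z + w) + τ • kk' := by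
          have h15 : SCov.icast (z + w) = SCov.icast z + SCov.icast w := by
            funext i; simp [SCov.icast]
          rw [hsmuleq, h15]
          have h16 : c = SCov.icast w + μb • k1' + y0 := by
            rw [← hceq2]; abel
          rw [h16, hy0eq]
          abel
        refine ⟨φ kk', (hK'phi _).1 hkkK', ?_⟩
        conv_lhs => rw [hc2]
        rw [_root_.map_add, _root_.map_smul]
    calc muCov s K L = sInf (Sset s) := hmc s
      _ ≤ μb + ρ' := csInf_le (hbdd s) hmemS
      _ ≤ (sInf (Sset 1) + ε/2) + ((((s:ℝ)-1)/V) ^ ((1:ℝ)/d) + ε/2) :=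
          add_le_add hμblt.le hρ'le
      _ = muCov 1 K L + (((s:ℝ)-1)/V) ^ ((1:ℝ)/d) + ε := by rw [hmc 1]; ring
  refine ⟨hlow, ?_⟩
  have hrw : ((s:ℝ)-1) ^ ((1:ℝ)/d) * (detL/volK) ^ ((1:ℝ)/d)
      = (((s:ℝ)-1)/V) ^ ((1:ℝ)/d) := by
    rw [hratio, ← Real.mul_rpow hs1R (by positivity), mul_one_div]
  rw [hrw]
  exact hupper


end
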